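/- Let θ > 0, z₀ with θz₀ ≥ c₁θδ > 0, and τ ~ Exp(1/h). For w = δ/(θ z₀ h), the probability that θz₀τ/δ + θ* lands in ∪_{k≥1}[2πk + π/6, 2πk + π/4] equals e^{θ*w}·(e^{−2πw}/(1−e^{−2πw}))·(e^{−πw/6} − e^{−πw/4}), which converges to 1/24 as w → 0⁺ and is bounded away from 0 uniformly over 0 < w ≤ 1/(c₁θh). -/

import Mathlib

open Real MeasureTheory ProbabilityTheory Filter

/-- The probability expression of Lemma 5.4 as a function of `w`, with phase `θ*`:
`g(w) = e^{θ*w} · e^{−2πw}/(1−e^{−2πw}) · (e^{−πw/6} − e^{−πw/4})`. -/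
noncomputable def spinnerProb (θstar w : ℝ) : ℝ :=
  Real.exp (θstar * w) * (Real.exp (-2 * Real.pi * w) / (1 - Real.exp (-2 * Real.pi * w)))
    * (Real.exp (-Real.pi * w / 6) - Real.exp (-Real.pi * w / 4))

lemma expMeasure_Iic' {r x : ℝ} (hr : 0 < r) (hx : 0 ≤ x) :
    expMeasure r (Set.Iic x) = ENNReal.ofReal (1 - Real.exp (-(r * x))) := by
  rw [expMeasure, gammaMeasure, withDensity_apply _ measurableSet_Iic]
  have := lintegral_exponentialPDF_eq_antiDeriv hr x
  rw [if_pos hx] at this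
  exact this

lemma expMeasure_Icc' {r a b : ℝ} (hr : 0 < r) (ha : 0 ≤ a) (hab : a ≤ b) :
    expMeasure r (Set.Icc a b)
      = ENNReal.ofReal (Real.exp (-(r * a)) - Real.exp (-(r * b))) := by
  have hpm : IsProbabilityMeasure (expMeasure r) := isProbabilityMeasure_expMeasure hr
  have hsing : expMeasure r {a} = 0 := by
    rw [expMeasure, gammaMeasure, withDensity_apply _ (measurableSet_singleton a)]
    simp [lintegral_singleton]
  have hIio : expMeasure r (Set.Iio a) = expMeasure r (Set.Iic a) := by
    refine le_antisymm (measure_mono Set.Iio_subset_Iic_self) ?_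
    rw [show Set.Iic a = Set.Iio a ∪ {a} from (Set.Iio_union_right).symm]
    exact (measure_union_le _ _).trans (by rw [hsing, add_zero])
  have hdiff : Set.Icc a b = Set.Iic b \ Set.Iio a := by
    ext t; simp [Set.mem_Icc, Set.mem_diff, not_lt, and_comm]
  rw [hdiff, measure_diff (show Set.Iio a ⊆ Set.Iic b from fun t ht => le_trans (le_of_lt ht) hab) measurableSet_Iio.nullMeasurableSet
    (measure_ne_top _ _), hIio, expMeasure_Iic' hr (ha.trans hab), expMeasure_Iic' hr ha,
    ← ENNReal.ofReal_sub _ (by nlinarith [Real.exp_le_one_iff.mpr (show -(r*a) ≤ 0 by nlinarith)])]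
  congr 1; ring

lemma spinnerProb_pos (θstar w : ℝ) (hw : 0 < w) : 0 < spinnerProb θstar w := by
  have hπ := Real.pi_pos
  have h1 : Real.exp (-2 * Real.pi * w) < 1 := Real.exp_lt_one_iff.mpr (by nlinarith)
  have h2 : Real.exp (-Real.pi * w / 4) < Real.exp (-Real.pi * w / 6) :=
    Real.exp_lt_exp.mpr (by nlinarith)
  have h3 : (0:ℝ) < Real.exp (-2 * Real.pi * w) := Real.exp_pos _
  unfold spinnerProb
  have h4 : (0:ℝ) < 1 - Real.exp (-2 * Real.pi * w) := by linarith
  have h5 : (0:ℝ) < Real.exp (-Real.pi * w / 6) - Real.exp (-Real.pi * w / 4) := by linarith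
  have h6 := Real.exp_pos (θstar * w)
  positivity

lemma spinnerProb_tendsto (θstar : ℝ) :
    Tendsto (spinnerProb θstar) (nhdsWithin 0 (Set.Ioi 0)) (nhds (1 / 24)) := by
  have hπ := Real.pi_pos
  set f : ℝ → ℝ := fun w => Real.exp (-Real.pi * w / 6) - Real.exp (-Real.pi * w / 4) with hfdef
  set g : ℝ → ℝ := fun w => 1 - Real.exp (-2 * Real.pi * w) with hgdef
  have hexp6 : HasDerivAt (fun w : ℝ => Real.exp (-Real.pi * w / 6)) (-(Real.pi / 6)) 0 := by
    have h := ((hasDerivAt_id (0:ℝ)).const_mul (-Real.pi / 6)).exp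
    simp only [id_eq, mul_zero, Real.exp_zero, mul_one, one_mul] at h
    have heq : (fun w : ℝ => Real.exp (-Real.pi * w / 6)) = fun x : ℝ => Real.exp (-Real.pi / 6 * x) := by
      funext w; congr 1; ring
    rw [heq]
    convert h using 1
    try ring
  have hexp4 : HasDerivAt (fun w : ℝ => Real.exp (-Real.pi * w / 4)) (-(Real.pi / 4)) 0 := by
    have h := ((hasDerivAt_id (0:ℝ)).const_mul (-Real.pi / 4)).exp
    simp only [id_eq, mul_zero, Real.exp_zero, mul_one, one_mul] at h
    have heq : (fun w : ℝ => Real.exp (-Real.pi * w / 4)) = fun x : ℝ => Real.exp (-Real.pi / 4 * x) := by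
      funext w; congr 1; ring
    rw [heq]
    convert h using 1
    try ring
  have hexp2 : HasDerivAt (fun w : ℝ => Real.exp (-2 * Real.pi * w)) (-(2 * Real.pi)) 0 := by
    have h := ((hasDerivAt_id (0:ℝ)).const_mul (-2 * Real.pi)).exp
    simp only [id_eq, mul_zero, Real.exp_zero, mul_one, one_mul] at h
    have heq : (fun w : ℝ => Real.exp (-2 * Real.pi * w)) = fun x : ℝ => Real.exp (-2 * Real.pi * x) := rfl
    rw [heq]
    convert h using 1
    try ring
  have hf : HasDerivAt f (Real.pi / 12) 0 := by
    have := hexp6.sub hexp4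
    exact this.congr_deriv (by ring)
  have hg : HasDerivAt g (2 * Real.pi) 0 := by
    have := (hasDerivAt_const (0:ℝ) (1:ℝ)).sub hexp2
    exact this.congr_deriv (by ring)
  have hmono : nhdsWithin (0:ℝ) (Set.Ioi 0) ≤ nhdsWithin 0 {(0:ℝ)}ᶜ :=
    nhdsWithin_mono 0 (fun x hx => ne_of_gt hx)
  have hfs : Tendsto (fun w => f w / w) (nhdsWithin 0 (Set.Ioi 0)) (nhds (Real.pi / 12)) := by
    have h := (hasDerivAt_iff_tendsto_slope.mp hf).mono_left hmono
    refine h.congr' ?_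
    filter_upwards [self_mem_nhdsWithin] with w hw
    have hw0 : w ≠ 0 := ne_of_gt hw
    simp [slope_def_field, hfdef]
    try ring
  have hgs : Tendsto (fun w => g w / w) (nhdsWithin 0 (Set.Ioi 0)) (nhds (2 * Real.pi)) := by
    have h := (hasDerivAt_iff_tendsto_slope.mp hg).mono_left hmono
    refine h.congr' ?_
    filter_upwards [self_mem_nhdsWithin] with w hw
    simp [slope_def_field, hgdef]
    try ring
  have hq : Tendsto (fun w => (f w / w) / (g w / w)) (nhdsWithin 0 (Set.Ioi 0))
      (nhds ((Real.pi / 12) / (2 * Real.pi))) := hfs.div hgs (by positivity)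
  have he1 : Tendsto (fun w : ℝ => Real.exp (θstar * w)) (nhdsWithin 0 (Set.Ioi 0)) (nhds 1) := by
    have : Continuous fun w : ℝ => Real.exp (θstar * w) := by continuity
    have := this.tendsto' 0 1 (by simp)
    exact this.mono_left nhdsWithin_le_nhds
  have he2 : Tendsto (fun w : ℝ => Real.exp (-2 * Real.pi * w)) (nhdsWithin 0 (Set.Ioi 0)) (nhds 1) := by
    have : Continuous fun w : ℝ => Real.exp (-2 * Real.pi * w) := by continuity
    have := this.tendsto' 0 1 (by simp)
    exact this.mono_left nhdsWithin_le_nhds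
  have hprod := (he1.mul he2).mul hq
  have hval : (1:ℝ) * 1 * ((Real.pi / 12) / (2 * Real.pi)) = 1 / 24 := by
    field_simp
    ring
  rw [hval] at hprod
  refine hprod.congr' ?_
  filter_upwards [self_mem_nhdsWithin] with w hw
  have hw' : (0:ℝ) < w := hw
  have hw0 : w ≠ 0 := ne_of_gt hw'
  have hg0 : g w ≠ 0 := by
    have : Real.exp (-2 * Real.pi * w) < 1 := Real.exp_lt_one_iff.mpr (by nlinarith)
    simp only [hgdef]
    intro hcon
    nlinarith [hcon]
  have hdd : (f w / w) / (g w / w) = f w / g w := by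
    rw [div_div_div_eq]
    rw [mul_comm w (g w)]
    first
    | exact mul_div_mul_right _ _ hw0
    | (field_simp)
  rw [hdd]
  simp only [spinnerProb, hfdef, hgdef]
  field_simp
  try ring

/-- The probability computation in Lemma 5.4: for `τ ~ Exp(1/h)` and
`w = δ/(θz₀h)`, the probability that `θz₀τ/δ + θ*` lands in
`∪_{k≥1}[2πk + π/6, 2πk + π/4]` equals `spinnerProb θ* w`; moreover
`spinnerProb θ* w → 1/24` as `w → 0⁺` and is bounded away from `0` uniformly
over `0 < w ≤ 1/(c₁θh)`. -/
theorem spinner_probability (θ δ z₀ c₁ h θstar : ℝ)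
    (hθ : 0 < θ) (hδ : 0 < δ) (hc₁ : 0 < c₁) (hh : 0 < h)
    (hz₀ : θ * z₀ ≥ c₁ * θ * δ)
    (hθstar : θstar ∈ Set.Ico (0:ℝ) (2 * Real.pi)) :
    expMeasure (1 / h)
        (⋃ k : ℕ, ⋃ _ : 1 ≤ k,
          {t : ℝ | 2 * Real.pi * k + Real.pi / 6 ≤ θ * z₀ * t / δ + θstar ∧
            θ * z₀ * t / δ + θstar ≤ 2 * Real.pi * k + Real.pi / 4})
      = ENNReal.ofReal (spinnerProb θstar (δ / (θ * z₀ * h))) ∧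
    Tendsto (spinnerProb θstar) (nhdsWithin 0 (Set.Ioi 0)) (nhds (1 / 24)) ∧
    ∃ ε : ℝ, 0 < ε ∧ ∀ w : ℝ, 0 < w → w ≤ 1 / (c₁ * θ * h) →
      ε ≤ spinnerProb θstar w := by
  obtain ⟨hθs0, hθs2π⟩ := hθstar
  have hπ := Real.pi_pos
  have hz : 0 < θ * z₀ := lt_of_lt_of_le (by positivity) hz₀
  have hr : 0 < 1 / h := by positivity
  set w := δ / (θ * z₀ * h) with hwdef
  have hw : 0 < w := by positivity
  refine ⟨?_, spinnerProb_tendsto θstar, ?_⟩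
  · -- Part 1: the measure computation
    set L := δ / (θ * z₀) with hLdef
    have hL0 : 0 < L := by positivity
    set A : ℕ → ℝ := fun k => (2 * Real.pi * k + Real.pi / 6 - θstar) * L with hAdef
    set B : ℕ → ℝ := fun k => (2 * Real.pi * k + Real.pi / 4 - θstar) * L with hBdef
    have key : ∀ X t : ℝ, X * L ≤ t ↔ X ≤ θ * z₀ * t / δ := by
      intro X t
      rw [hLdef, ← mul_div_assoc, div_le_iff₀ hz, ← le_div_iff₀ hδ,
        show t * (θ * z₀) / δ = θ * z₀ * t / δ by ring]
    have key2 : ∀ X t : ℝ, t ≤ X * L ↔ θ * z₀ * t / δ ≤ X := by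
      intro X t
      rw [hLdef, ← mul_div_assoc, le_div_iff₀ hz, ← div_le_iff₀ hδ,
        show t * (θ * z₀) / δ = θ * z₀ * t / δ by ring]
    have hset : ∀ k : ℕ,
        {t : ℝ | 2 * Real.pi * k + Real.pi / 6 ≤ θ * z₀ * t / δ + θstar ∧
          θ * z₀ * t / δ + θstar ≤ 2 * Real.pi * k + Real.pi / 4} = Set.Icc (A k) (B k) := by
      intro k
      ext t
      simp only [Set.mem_setOf_eq, Set.mem_Icc, hAdef, hBdef]
      constructor
      · rintro ⟨h1, h2⟩
        exact ⟨(key _ t).mpr (by linarith), (key2 _ t).mpr (by linarith)⟩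
      · rintro ⟨h1, h2⟩
        have k1 := (key _ t).mp h1
        have k2 := (key2 _ t).mp h2
        constructor <;> linarith
    have hunion : (⋃ k : ℕ, ⋃ _ : 1 ≤ k,
        {t : ℝ | 2 * Real.pi * k + Real.pi / 6 ≤ θ * z₀ * t / δ + θstar ∧
          θ * z₀ * t / δ + θstar ≤ 2 * Real.pi * k + Real.pi / 4})
        = ⋃ n : ℕ, Set.Icc (A (n + 1)) (B (n + 1)) := by
      simp only [hset]
      ext t
      simp only [Set.mem_iUnion]
      constructor
      · rintro ⟨k, hk, ht⟩
        exact ⟨k - 1, by rwa [Nat.sub_add_cancel hk]⟩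
      · rintro ⟨n, ht⟩
        exact ⟨n + 1, Nat.le_add_left 1 n, ht⟩
    have hABlt : ∀ m n : ℕ, m < n → B m < A n := by
      intro m n hmn
      apply mul_lt_mul_of_pos_right _ hL0
      have hcast : (m : ℝ) + 1 ≤ n := by exact_mod_cast hmn
      nlinarith
    have hdisj : Pairwise (Function.onFun Disjoint fun n : ℕ => Set.Icc (A (n + 1)) (B (n + 1))) := by
      refine (pairwise_disjoint_on _).mpr ?_
      intro m n hmn
      apply Set.disjoint_left.mpr
      intro t ht ht'
      have := hABlt (m + 1) (n + 1) (by omega)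
      have h1 := ht.2
      have h2 := ht'.1
      linarith
    have hA0 : ∀ n : ℕ, 0 ≤ A (n + 1) := by
      intro n
      apply mul_nonneg _ hL0.le
      have hcast : (1 : ℝ) ≤ ((n : ℝ) + 1) := by
        have : (0 : ℝ) ≤ n := Nat.cast_nonneg n
        linarith
      push_cast
      nlinarith
    have hAB : ∀ n : ℕ, A (n + 1) ≤ B (n + 1) := by
      intro n
      apply mul_le_mul_of_nonneg_right _ hL0.le
      nlinarith
    rw [hunion, measure_iUnion hdisj fun n => measurableSet_Icc]
    set ρ := Real.exp (-2 * Real.pi * w) with hρdef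
    set c := Real.exp (θstar * w) * (Real.exp (-Real.pi * w / 6) - Real.exp (-Real.pi * w / 4))
      with hcdef
    have hterm : ∀ k : ℕ,
        Real.exp (-(1 / h * A k)) - Real.exp (-(1 / h * B k)) = c * ρ ^ k := by
      intro k
      have hρk : ρ ^ k = Real.exp ((k : ℝ) * (-2 * Real.pi * w)) := (Real.exp_nat_mul _ k).symm
      have e6 : Real.exp (-(1 / h * A k))
          = Real.exp ((k : ℝ) * (-2 * Real.pi * w))
            * (Real.exp (θstar * w) * Real.exp (-Real.pi * w / 6)) := by
        rw [← Real.exp_add, ← Real.exp_add]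
        congr 1
        simp only [hAdef, hLdef, hwdef]
        field_simp
        ring
      have e4 : Real.exp (-(1 / h * B k))
          = Real.exp ((k : ℝ) * (-2 * Real.pi * w))
            * (Real.exp (θstar * w) * Real.exp (-Real.pi * w / 4)) := by
        rw [← Real.exp_add, ← Real.exp_add]
        congr 1
        simp only [hBdef, hLdef, hwdef]
        field_simp
        ring
      rw [e6, e4, hρk, hcdef]
      ring
    have hρ0 : (0 : ℝ) ≤ ρ := (Real.exp_pos _).le
    have hρ1 : ρ < 1 := by
      rw [hρdef]
      exact Real.exp_lt_one_iff.mpr (by nlinarith)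
    have hc0 : 0 ≤ c := by
      rw [hcdef]
      have : Real.exp (-Real.pi * w / 4) ≤ Real.exp (-Real.pi * w / 6) :=
        Real.exp_le_exp.mpr (by nlinarith)
      have := (Real.exp_pos (θstar * w)).le
      nlinarith
    have hsum : Summable fun n : ℕ => c * ρ ^ (n + 1) := by
      have heq : (fun n : ℕ => c * ρ ^ (n + 1)) = fun n : ℕ => c * ρ * ρ ^ n := by
        funext n; ring
      rw [heq]
      exact (summable_geometric_of_lt_one hρ0 hρ1).mul_left _
    have hmeas : ∀ n : ℕ, expMeasure (1 / h) (Set.Icc (A (n + 1)) (B (n + 1)))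
        = ENNReal.ofReal (c * ρ ^ (n + 1)) := by
      intro n
      rw [expMeasure_Icc' hr (hA0 n) (hAB n), hterm (n + 1)]
    rw [tsum_congr hmeas, ← ENNReal.ofReal_tsum_of_nonneg (fun n => by positivity) hsum]
    congr 1
    have htsum : ∑' n : ℕ, c * ρ ^ (n + 1) = c * ρ * (1 - ρ)⁻¹ := by
      have h2 : ∑' n : ℕ, c * ρ * ρ ^ n = c * ρ * (1 - ρ)⁻¹ := by
        rw [tsum_mul_left, tsum_geometric_of_lt_one hρ0 hρ1]
      rw [← h2]
      exact tsum_congr fun n => by ring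
    rw [htsum]
    simp only [spinnerProb]
    rw [hcdef, hρdef]
    ring
  · -- Part 3: uniform lower bound
    have h48 : ∀ᶠ x in nhdsWithin 0 (Set.Ioi 0), 1 / 48 < spinnerProb θstar x :=
      (spinnerProb_tendsto θstar).eventually (eventually_gt_nhds (by norm_num))
    obtain ⟨u, hu, husub⟩ := mem_nhdsGT_iff_exists_Ioo_subset.mp h48
    have hu0 : (0 : ℝ) < u := hu
    set M := 1 / (c₁ * θ * h) with hMdef
    have hM : 0 < M := by positivity
    set a := min u M with hadef
    have ha0 : 0 < a := lt_min hu0 hM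
    have haM : a ≤ M := min_le_right _ _
    have hcont : ContinuousOn (spinnerProb θstar) (Set.Icc a M) := by
      intro x hx
      have hx0 : 0 < x := lt_of_lt_of_le ha0 hx.1
      have hπ := Real.pi_pos
      have hne : 1 - Real.exp (-2 * Real.pi * x) ≠ 0 := by
        have : Real.exp (-2 * Real.pi * x) < 1 := Real.exp_lt_one_iff.mpr (by nlinarith)
        intro hcon
        linarith
      apply ContinuousAt.continuousWithinAt
      unfold spinnerProb
      apply ContinuousAt.mul
      apply ContinuousAt.mul
      · exact (Real.continuous_exp.comp (continuous_const.mul continuous_id)).continuousAt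
      · exact ContinuousAt.div
          (Real.continuous_exp.comp (continuous_const.mul continuous_id)).continuousAt
          ((continuous_const.sub
            (Real.continuous_exp.comp (continuous_const.mul continuous_id))).continuousAt) hne
      · exact ((Real.continuous_exp.comp ((continuous_const.mul continuous_id).div_const 6)).sub
          (Real.continuous_exp.comp ((continuous_const.mul continuous_id).div_const 4))).continuousAt
    obtain ⟨x₀, hx₀mem, hx₀min⟩ := isCompact_Icc.exists_isMinOn (Set.nonempty_Icc.mpr haM) hcont
    refine ⟨min (1 / 48) (spinnerProb θstar x₀), ?_, ?_⟩
    · exact lt_min (by norm_num) (spinnerProb_pos _ _ (lt_of_lt_of_le ha0 hx₀mem.1))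
    · intro v hv0 hvM
      by_cases hva : v < a
      · have hvu : v ∈ Set.Ioo 0 u := ⟨hv0, lt_of_lt_of_le hva (min_le_left _ _)⟩
        exact le_trans (min_le_left _ _) (le_of_lt (husub hvu))
      · have hvmem : v ∈ Set.Icc a M := ⟨not_lt.mp hva, hvM⟩
        exact le_trans (min_le_right _ _) (isMinOn_iff.mp hx₀min v hvmem)
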